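/- For odd c ≥ 3, the majority voting attack at bias p = 1/2 yields a = 1/2, a₁ = 1/2 + δ_c, and a₀ = 1/2 - δ_c, where δ_c = (1/2)·C(c-1, (c-1)/2)·2^{-(c-1)}. Moreover lim_{c→∞} c·δ_c² = 1/(2π). -/

import Mathlib

open Real Filter Finset

/-- `δ_c = (1/2) C(c-1,(c-1)/2) 2^{-(c-1)}`. -/
noncomputable def majDelta (c : ℕ) : ℝ := (1/2) * ((c-1).choose ((c-1)/2) : ℝ) * (2:ℝ)^(-((c : ℝ) - 1))

lemma majDelta_eq (k : ℕ) :
    majDelta (2*k+1) = (1/2) * (((2*k).choose k : ℕ) : ℝ) * (1/2)^(2*k) := by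
  unfold majDelta
  rw [show 2*k+1-1 = 2*k from by omega, show (2*k)/2 = k from by omega]
  congr 1
  rw [show -(((2*k+1 : ℕ) : ℝ) - 1) = -((2*k : ℕ) : ℝ) from by push_cast; ring,
    Real.rpow_neg (by norm_num), Real.rpow_natCast, div_pow, one_pow, one_div]

lemma h4pow (k : ℕ) : (4:ℝ)^k * (1/2)^(2*k) = 1 := by
  rw [pow_mul, ← mul_pow]; norm_num

lemma even_halfway (k : ℕ) :
    2 * (∑ j ∈ range k, (2*k).choose j) + (2*k).choose k = 4^k := by
  have htot : ∑ j ∈ range (2*k+1), (2*k).choose j = 4^k := by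
    rw [Nat.sum_range_choose, pow_mul]; norm_num
  have hsplit : ∑ j ∈ range (2*k+1), (2*k).choose j
      = (∑ j ∈ range (k+1), (2*k).choose j) + ∑ i ∈ range k, (2*k).choose (k+1+i) := by
    rw [range_eq_Ico, ← Finset.sum_Ico_consecutive _ (Nat.zero_le (k+1)) (by omega : k+1 ≤ 2*k+1),
      ← range_eq_Ico, Finset.sum_Ico_eq_sum_range,
      show 2*k+1-(k+1) = k from by omega]
  have hrefl : ∑ i ∈ range k, (2*k).choose (k+1+i) = ∑ j ∈ range k, (2*k).choose j := by
    rw [← Finset.sum_range_reflect (fun j => (2*k).choose j) k]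
    apply Finset.sum_congr rfl
    intro i hi
    rw [Finset.mem_range] at hi
    rw [← Nat.choose_symm (show k+1+i ≤ 2*k by omega)]
    congr 1
    omega
  rw [hsplit, hrefl, Finset.sum_range_succ] at htot
  omega

lemma natA (k : ℕ) : ∑ z ∈ Ico (k+1) (2*k+1+1), (2*k+1).choose z = 4^k := by
  have h := Finset.sum_Ico_consecutive (Nat.choose (2*k+1))
    (Nat.zero_le (k+1)) (show k+1 ≤ 2*k+1+1 by omega)
  simp only [← range_eq_Ico] at h
  have ha := Nat.sum_range_choose_halfway k
  have hb := Nat.sum_range_choose (2*k+1)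
  have h4 : (2:ℕ)^(2*k+1) = 2*4^k := by
    rw [pow_succ, pow_mul]; ring
  omega

lemma natB (k : ℕ) :
    2 * (∑ z ∈ Ico k (2*k+1), (2*k).choose z) = 4^k + (2*k).choose k := by
  have h := Finset.sum_Ico_consecutive (Nat.choose (2*k))
    (Nat.zero_le k) (show k ≤ 2*k+1 by omega)
  simp only [← range_eq_Ico] at h
  have htot : ∑ j ∈ range (2*k+1), (2*k).choose j = 4^k := by
    rw [Nat.sum_range_choose, pow_mul]; norm_num
  have he := even_halfway k
  omega

lemma natC (k : ℕ) :
    2 * (∑ z ∈ Ico (k+1) (2*k+1), (2*k).choose z) + (2*k).choose k = 4^k := by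
  have h := Finset.sum_Ico_consecutive (Nat.choose (2*k))
    (Nat.zero_le (k+1)) (show k+1 ≤ 2*k+1 by omega)
  simp only [← range_eq_Ico] at h
  have htot : ∑ j ∈ range (2*k+1), (2*k).choose j = 4^k := by
    rw [Nat.sum_range_choose, pow_mul]; norm_num
  have he := even_halfway k
  have hs : ∑ j ∈ range (k+1), (2*k).choose j
      = (∑ j ∈ range k, (2*k).choose j) + (2*k).choose k := Finset.sum_range_succ _ _
  omega

lemma partA (k : ℕ) :
    (∑ z ∈ range (2*k+1+1), ((2*k+1).choose z : ℝ) * (1/2)^(2*k+1) *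
      (if 2*k+1 < 2*z then (1:ℝ) else 0)) = 1/2 := by
  rw [range_eq_Ico,
    ← Finset.sum_Ico_consecutive _ (Nat.zero_le (k+1)) (show k+1 ≤ 2*k+1+1 by omega)]
  have h1 : ∑ z ∈ Ico 0 (k+1), ((2*k+1).choose z : ℝ) * (1/2)^(2*k+1) *
      (if 2*k+1 < 2*z then (1:ℝ) else 0) = 0 := by
    apply Finset.sum_eq_zero
    intro z hz
    rw [Finset.mem_Ico] at hz
    rw [if_neg (by omega)]
    ring
  have h2 : ∑ z ∈ Ico (k+1) (2*k+1+1), ((2*k+1).choose z : ℝ) * (1/2)^(2*k+1) *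
      (if 2*k+1 < 2*z then (1:ℝ) else 0)
      = ((∑ z ∈ Ico (k+1) (2*k+1+1), (2*k+1).choose z : ℕ) : ℝ) * (1/2)^(2*k+1) := by
    push_cast
    rw [Finset.sum_mul]
    apply Finset.sum_congr rfl
    intro z hz
    rw [Finset.mem_Ico] at hz
    rw [if_pos (by omega)]
    ring
  rw [h1, h2, natA, zero_add]
  push_cast
  rw [pow_succ]
  linear_combination (1/2) * h4pow k

lemma partB (k : ℕ) :
    (∑ z ∈ Finset.Icc 1 (2*k+1), ((2*k).choose (z-1) : ℝ) * (1/2)^(2*k) *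
      (if 2*k+1 < 2*z then (1:ℝ) else 0))
      = 1/2 + (1/2) * (((2*k).choose k : ℕ) : ℝ) * (1/2)^(2*k) := by
  rw [show Finset.Icc 1 (2*k+1) = Finset.Ico 1 (2*k+1+1) from (Finset.Ico_add_one_right_eq_Icc _ _).symm,
    Finset.sum_Ico_eq_sum_range, show 2*k+1+1-1 = 2*k+1 from rfl]
  simp only [Nat.add_sub_cancel_left]
  rw [range_eq_Ico,
    ← Finset.sum_Ico_consecutive _ (Nat.zero_le k) (show k ≤ 2*k+1 by omega)]
  have h1 : ∑ i ∈ Ico 0 k, ((2*k).choose i : ℝ) * (1/2)^(2*k) *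
      (if 2*k+1 < 2*(1+i) then (1:ℝ) else 0) = 0 := by
    apply Finset.sum_eq_zero
    intro i hi
    rw [Finset.mem_Ico] at hi
    rw [if_neg (by omega)]
    ring
  have h2 : ∑ i ∈ Ico k (2*k+1), ((2*k).choose i : ℝ) * (1/2)^(2*k) *
      (if 2*k+1 < 2*(1+i) then (1:ℝ) else 0)
      = ((∑ i ∈ Ico k (2*k+1), (2*k).choose i : ℕ) : ℝ) * (1/2)^(2*k) := by
    push_cast
    rw [Finset.sum_mul]
    apply Finset.sum_congr rfl
    intro i hi
    rw [Finset.mem_Ico] at hi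
    rw [if_pos (by omega)]
    ring
  rw [h1, h2, zero_add]
  have hc : (2:ℝ) * ((∑ i ∈ Ico k (2*k+1), (2*k).choose i : ℕ) : ℝ)
      = 4^k + (((2*k).choose k : ℕ) : ℝ) := by exact_mod_cast natB k
  linear_combination ((1/2)^(2*k)/2) * hc + (1/2) * h4pow k

lemma partC (k : ℕ) :
    (∑ z ∈ range (2*k+1), ((2*k).choose z : ℝ) * (1/2)^(2*k) *
      (if 2*k+1 < 2*z then (1:ℝ) else 0))
      = 1/2 - (1/2) * (((2*k).choose k : ℕ) : ℝ) * (1/2)^(2*k) := by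
  rw [range_eq_Ico,
    ← Finset.sum_Ico_consecutive _ (Nat.zero_le (k+1)) (show k+1 ≤ 2*k+1 by omega)]
  have h1 : ∑ z ∈ Ico 0 (k+1), ((2*k).choose z : ℝ) * (1/2)^(2*k) *
      (if 2*k+1 < 2*z then (1:ℝ) else 0) = 0 := by
    apply Finset.sum_eq_zero
    intro z hz
    rw [Finset.mem_Ico] at hz
    rw [if_neg (by omega)]
    ring
  have h2 : ∑ z ∈ Ico (k+1) (2*k+1), ((2*k).choose z : ℝ) * (1/2)^(2*k) *
      (if 2*k+1 < 2*z then (1:ℝ) else 0)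
      = ((∑ z ∈ Ico (k+1) (2*k+1), (2*k).choose z : ℕ) : ℝ) * (1/2)^(2*k) := by
    push_cast
    rw [Finset.sum_mul]
    apply Finset.sum_congr rfl
    intro z hz
    rw [Finset.mem_Ico] at hz
    rw [if_pos (by omega)]
    ring
  rw [h1, h2, zero_add]
  have hc : (2:ℝ) * ((∑ z ∈ Ico (k+1) (2*k+1), (2*k).choose z : ℕ) : ℝ)
      + (((2*k).choose k : ℕ) : ℝ) = 4^k := by exact_mod_cast natC k
  linear_combination ((1/2)^(2*k)/2) * hc + (1/2) * h4pow k

lemma central_stirling (m : ℕ) (hm : 1 ≤ m) :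
    Stirling.stirlingSeq (2*m) / (Stirling.stirlingSeq m)^2
      = ((2*m).choose m : ℝ) * Real.sqrt m / 4^m := by
  have hm0 : (0:ℝ) < m := by exact_mod_cast hm
  have hsm : (0:ℝ) < Real.sqrt m := Real.sqrt_pos.mpr hm0
  have hfm : (0:ℝ) < (Nat.factorial m : ℝ) := by exact_mod_cast Nat.factorial_pos m
  have he : (0:ℝ) < Real.exp 1 := Real.exp_pos 1
  have hC : ((2*m).choose m : ℝ) * (Nat.factorial m : ℝ) * (Nat.factorial m : ℝ)
      = (Nat.factorial (2*m) : ℝ) := by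
    have := Nat.choose_mul_factorial_mul_factorial (show m ≤ 2*m by omega)
    have h2 : 2*m - m = m := by omega
    rw [h2] at this
    exact_mod_cast this
  rw [Stirling.stirlingSeq, Stirling.stirlingSeq]
  have hcast : ((2*m : ℕ) : ℝ) = 2 * (m : ℝ) := by push_cast; ring
  rw [hcast]
  have e1 : (4:ℝ)^m = 2^(2*m) := by rw [pow_mul]; norm_num
  have hsqrt4 : Real.sqrt (2*(2*(m:ℝ))) = 2 * Real.sqrt m := by
    rw [show (2:ℝ)*(2*(m:ℝ)) = 2^2 * m by ring, Real.sqrt_mul (by positivity),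
      Real.sqrt_sq (by norm_num)]
  have hpow : ((2*(m:ℝ)) / Real.exp 1) ^ (2*m) = 4^m * (((m:ℝ)/Real.exp 1)^m)^2 := by
    rw [show (2*(m:ℝ))/Real.exp 1 = 2*((m:ℝ)/Real.exp 1) from by ring, mul_pow, e1,
      ← pow_mul, mul_comm m 2]
  rw [hsqrt4, hpow,
    div_pow (Nat.factorial m : ℝ) (Real.sqrt (2*(m:ℝ)) * ((m:ℝ)/Real.exp 1)^m) 2,
    mul_pow, Real.sq_sqrt (show (0:ℝ) ≤ 2*(m:ℝ) by positivity)]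
  rw [← hC]
  have hsq : Real.sqrt m * Real.sqrt m = (m:ℝ) := Real.mul_self_sqrt hm0.le
  rw [show (2:ℝ)*(m:ℝ) = 2*(Real.sqrt m * Real.sqrt m) from by rw [hsq]]
  have hq : (0:ℝ) < ((m:ℝ)/Real.exp 1)^m := by positivity
  field_simp

lemma keyD (m : ℕ) (hm : 1 ≤ m) :
    ((2*m+1 : ℕ) : ℝ) * (majDelta (2*m+1))^2
      = ((2*(m:ℝ)+1))/(4*m) * ((((2*m).choose m : ℝ) * Real.sqrt m / 4^m))^2 := by
  rw [majDelta_eq m]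
  have hm0 : (0:ℝ) < m := by exact_mod_cast hm
  have hsq : Real.sqrt m * Real.sqrt m = (m:ℝ) := Real.mul_self_sqrt hm0.le
  have h4 := h4pow m
  have h4pos : (0:ℝ) < (4:ℝ)^m := by positivity
  push_cast
  field_simp
  linear_combination (4 * (m:ℝ) * (((2*m).choose m : ℕ) : ℝ)^2 * ((4:ℝ)^m * (1/2:ℝ)^(2*m) + 1)) * h4
    - (4 * (((2*m).choose m : ℕ) : ℝ)^2) * hsq

lemma tendstoD :
    Tendsto (fun m : ℕ => ((2*m+1 : ℕ) : ℝ) * (majDelta (2*m+1))^2)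
      atTop (nhds (1 / (2 * Real.pi))) := by
  have hπ : (0:ℝ) < π := Real.pi_pos
  have h2m : Tendsto (fun m : ℕ => 2*m) atTop atTop :=
    tendsto_atTop_atTop.mpr (fun b => ⟨b, fun a ha => by omega⟩)
  have hs := Stirling.tendsto_stirlingSeq_sqrt_pi
  have hs2 : Tendsto (fun m : ℕ => Stirling.stirlingSeq (2*m)) atTop (nhds (Real.sqrt π)) :=
    hs.comp h2m
  have hratio : Tendsto (fun m : ℕ => Stirling.stirlingSeq (2*m) / (Stirling.stirlingSeq m)^2)
      atTop (nhds (Real.sqrt π / (Real.sqrt π)^2)) :=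
    hs2.div (hs.pow 2) (by positivity)
  have h0 : Tendsto (fun m : ℕ => 1/(m:ℝ)) atTop (nhds 0) := tendsto_one_div_atTop_nhds_zero_nat
  have hfrac : Tendsto (fun m : ℕ => (2*(m:ℝ)+1)/(4*m)) atTop (nhds (1/2)) := by
    have h1 : Tendsto (fun m : ℕ => ((2:ℝ) + 1/m)/4) atTop (nhds (((2:ℝ)+0)/4)) :=
      (tendsto_const_nhds.add h0).div_const 4
    rw [show ((2:ℝ)+0)/4 = 1/2 by norm_num] at h1
    refine h1.congr' ?_
    filter_upwards [eventually_ge_atTop 1] with m hm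
    have hm0 : (m:ℝ) ≠ 0 := by
      have : (0:ℝ) < m := by exact_mod_cast hm
      exact this.ne'
    rw [div_eq_div_iff (by norm_num : (4:ℝ) ≠ 0) (mul_ne_zero (by norm_num : (4:ℝ) ≠ 0) hm0)]
    field_simp
  have hmul := hfrac.mul (hratio.pow 2)
  have hval : (1/2 : ℝ) * (Real.sqrt π / (Real.sqrt π)^2)^2 = 1/(2*π) := by
    rw [Real.sq_sqrt hπ.le, div_pow, Real.sq_sqrt hπ.le]
    field_simp
  rw [hval] at hmul
  refine hmul.congr' ?_
  filter_upwards [eventually_ge_atTop 1] with m hm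
  rw [central_stirling m hm]
  exact (keyD m hm).symm

/-- For odd `c ≥ 3`, majority voting at `p = 1/2` gives `a = 1/2`, `a₁ = 1/2 + δ_c`,
`a₀ = 1/2 - δ_c`, and `c δ_c² → 1/(2π)` along odd coalition sizes. -/
theorem stmt17 :
    (∀ c : ℕ, Odd c → 3 ≤ c →
      (∑ z ∈ Finset.range (c+1), (c.choose z : ℝ) * (1/2)^c *
          (if c < 2 * z then (1:ℝ) else 0)) = 1/2 ∧
      (∑ z ∈ Finset.Icc 1 c, ((c-1).choose (z-1) : ℝ) * (1/2)^(c-1) *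
          (if c < 2 * z then (1:ℝ) else 0)) = 1/2 + majDelta c ∧
      (∑ z ∈ Finset.range c, ((c-1).choose z : ℝ) * (1/2)^(c-1) *
          (if c < 2 * z then (1:ℝ) else 0)) = 1/2 - majDelta c) ∧
    Tendsto (fun m : ℕ => ((2*m+1 : ℕ) : ℝ) * (majDelta (2*m+1))^2)
      atTop (nhds (1 / (2 * Real.pi))) := by
  constructor
  · intro c hc hc3
    obtain ⟨k, hk⟩ := hc
    have hk' : c = 2*k+1 := by omega
    subst hk'
    simp only [Nat.add_sub_cancel]
    refine ⟨partA k, ?_, ?_⟩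
    · rw [majDelta_eq k]
      exact partB k
    · rw [majDelta_eq k]
      exact partC k
  · exact tendstoD
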